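/- Let m ≥ 1, r₁,…,r_m > 0 and ε₁,…,ε_m > 0, define the Young function N(s) := Σ_{i=1}^m ε_i·|s|^{r_i+1}, and let N* denote its conjugate. For each i set c_i := (1/(r_i+1))^{1/r_i}·r_i/(r_i+1). Let a₁,…,a_m satisfy 0 ≤ a_i ≤ ε_i for each i, and let Φ₀ : ℝ → ℝ satisfy |Φ₀(s)| ≤ Σ_{i=1}^m a_i·|s|^{r_i} for all s. Then for all s ∈ ℝ: N*(Φ₀(s)) ≤ Σ_{i=1}^m a_i·c_i·|s|^{r_i+1}; in particular N*(Φ₀(s)) ≤ c̃·N(s) with c̃ := max_i (a_i·c_i/ε_i). (Paper Lemma 3.6(ii).) -/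

import Mathlib

open Real

/-- Key pointwise estimate: `t·x^r − t^{r+1} ≤ c·x^{r+1}` with the sharp constant
`c = (1/(r+1))^{1/r}·r/(r+1)`, obtained from Young's inequality with conjugate
exponents `r+1` and `(r+1)/r` applied to suitably rescaled variables. -/
lemma key_young {r t x : ℝ} (hr : 0 < r) (ht : 0 ≤ t) (hx : 0 ≤ x) :
    t * x ^ r - t ^ (r + 1) ≤ (1 / (r + 1)) ^ (1 / r) * (r / (r + 1)) * x ^ (r + 1) := by
  have hr1 : (0:ℝ) < r + 1 := by linarith
  have hpq : (r + 1).HolderConjugate ((r + 1) / r) := by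
    constructor
    · rw [inv_div, inv_one]
      field_simp
      ring
    · linarith
    · positivity
  have hl : (0:ℝ) < (r + 1) ^ ((1:ℝ) / (r + 1)) := rpow_pos_of_pos hr1 _
  set l : ℝ := (r + 1) ^ ((1:ℝ) / (r + 1)) with hldef
  have h1 : t * x ^ r = (l * t) * (x ^ r / l) := by
    field_simp
  have h2 := Real.young_inequality_of_nonneg
    (mul_nonneg hl.le ht) (div_nonneg (rpow_nonneg hx r) hl.le) hpq
  have hlp : l ^ (r + 1) = r + 1 := by
    rw [hldef, ← Real.rpow_mul hr1.le, one_div, inv_mul_cancel₀ hr1.ne', rpow_one]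
  have hlq : l ^ ((r + 1) / r) = (r + 1) ^ ((1:ℝ) / r) := by
    rw [hldef, ← Real.rpow_mul hr1.le]
    congr 1
    field_simp
  have hxq : (x ^ r) ^ ((r + 1) / r) = x ^ (r + 1) := by
    rw [← Real.rpow_mul hx]
    congr 1
    field_simp
  have e1 : (l * t) ^ (r + 1) / (r + 1) = t ^ (r + 1) := by
    rw [Real.mul_rpow hl.le ht, hlp]
    field_simp
  have hc : ((1:ℝ) / (r + 1)) ^ ((1:ℝ) / r) = ((r + 1) ^ ((1:ℝ) / r))⁻¹ := by
    rw [one_div, Real.inv_rpow hr1.le]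
  have hq0 : ((r + 1) ^ ((1:ℝ) / r)) ≠ 0 := (rpow_pos_of_pos hr1 _).ne'
  have e2 : (x ^ r / l) ^ ((r + 1) / r) / ((r + 1) / r)
      = (1 / (r + 1)) ^ (1 / r) * (r / (r + 1)) * x ^ (r + 1) := by
    rw [Real.div_rpow (rpow_nonneg hx r) hl.le, hxq, hlq, hc]
    field_simp
  rw [← h1, e1, e2] at h2
  linarith

/-- The conjugate Young function `N*(s) := sup { r·|s| − N(r) : r ≥ 0 }`. -/
noncomputable def youngConj (N : ℝ → ℝ) (s : ℝ) : ℝ :=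
  sSup {v : ℝ | ∃ r : ℝ, 0 ≤ r ∧ v = r * |s| - N r}

/-- Paper Lemma 3.6(ii): for `N(s) = Σ εᵢ |s|^{rᵢ+1}` and `|Φ₀(s)| ≤ Σ aᵢ |s|^{rᵢ}`
with `0 ≤ aᵢ ≤ εᵢ`, one has `N*(Φ₀(s)) ≤ Σ aᵢ cᵢ |s|^{rᵢ+1} ≤ c̃ N(s)` where
`cᵢ = (1/(rᵢ+1))^{1/rᵢ}·rᵢ/(rᵢ+1)` and `c̃ = maxᵢ (aᵢ cᵢ / εᵢ)`. -/
theorem stmt8 (m : ℕ) (hm : 1 ≤ m) (r ε a : Fin m → ℝ)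
    (hr : ∀ i, 0 < r i) (hε : ∀ i, 0 < ε i)
    (ha : ∀ i, 0 ≤ a i ∧ a i ≤ ε i)
    (Φ₀ : ℝ → ℝ) (hΦ : ∀ s : ℝ, |Φ₀ s| ≤ ∑ i, a i * |s| ^ r i)
    (ctil : ℝ)
    (hctil : IsGreatest
      (Set.range fun i =>
        a i * ((1 / (r i + 1)) ^ (1 / r i) * (r i / (r i + 1))) / ε i) ctil) :
    ∀ s : ℝ,
      youngConj (fun t => ∑ i, ε i * |t| ^ (r i + 1)) (Φ₀ s) ≤
        ∑ i, a i * ((1 / (r i + 1)) ^ (1 / r i) * (r i / (r i + 1))) * |s| ^ (r i + 1) ∧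
      youngConj (fun t => ∑ i, ε i * |t| ^ (r i + 1)) (Φ₀ s) ≤
        ctil * ∑ i, ε i * |s| ^ (r i + 1) := by
  intro s
  set c : Fin m → ℝ := fun i => (1 / (r i + 1)) ^ (1 / r i) * (r i / (r i + 1)) with hcdef
  have hc0 : ∀ i, 0 ≤ c i := fun i =>
    mul_nonneg (rpow_nonneg (by have h := hr i; positivity) _)
      (div_nonneg (hr i).le (by linarith [hr i]))
  have hB0 : 0 ≤ ∑ i, a i * c i * |s| ^ (r i + 1) :=
    Finset.sum_nonneg fun i _ =>
      mul_nonneg (mul_nonneg (ha i).1 (hc0 i)) (rpow_nonneg (abs_nonneg s) _)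
  have hmain : youngConj (fun t => ∑ i, ε i * |t| ^ (r i + 1)) (Φ₀ s) ≤
      ∑ i, a i * c i * |s| ^ (r i + 1) := by
    apply Real.sSup_le _ hB0
    rintro v ⟨t, ht, rfl⟩
    have habs : |t| = t := abs_of_nonneg ht
    have h1 : t * |Φ₀ s| ≤ ∑ i, a i * t * |s| ^ r i := by
      calc t * |Φ₀ s| ≤ t * ∑ i, a i * |s| ^ r i :=
            mul_le_mul_of_nonneg_left (hΦ s) ht
        _ = ∑ i, a i * t * |s| ^ r i := by rw [Finset.mul_sum]; congr 1; ext i; ring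
    have h2 : ∀ i ∈ Finset.univ, a i * t * |s| ^ r i - ε i * t ^ (r i + 1) ≤
        a i * c i * |s| ^ (r i + 1) := by
      intro i _
      have key := key_young (hr i) ht (abs_nonneg s)
      have h3 : a i * (t * |s| ^ r i - t ^ (r i + 1)) ≤ a i * (c i * |s| ^ (r i + 1)) :=
        mul_le_mul_of_nonneg_left (by rw [hcdef]; simpa [mul_assoc] using key) (ha i).1
      have h4 : a i * t ^ (r i + 1) ≤ ε i * t ^ (r i + 1) :=
        mul_le_mul_of_nonneg_right (ha i).2 (rpow_nonneg ht _)
      nlinarith [h3, h4]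
    calc t * |Φ₀ s| - ∑ i, ε i * |t| ^ (r i + 1)
        ≤ ∑ i, a i * t * |s| ^ r i - ∑ i, ε i * t ^ (r i + 1) := by
          rw [habs]; linarith
      _ = ∑ i, (a i * t * |s| ^ r i - ε i * t ^ (r i + 1)) := by
          rw [Finset.sum_sub_distrib]
      _ ≤ ∑ i, a i * c i * |s| ^ (r i + 1) := Finset.sum_le_sum h2
  refine ⟨hmain, hmain.trans ?_⟩
  rw [Finset.mul_sum]
  apply Finset.sum_le_sum
  intro i _
  have hub : a i * c i / ε i ≤ ctil := hctil.2 ⟨i, rfl⟩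
  have : a i * c i ≤ ctil * ε i := by
    rw [div_le_iff₀ (hε i)] at hub
    linarith
  have := mul_le_mul_of_nonneg_right this (rpow_nonneg (abs_nonneg s) (r i + 1))
  nlinarith [this]
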